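/- For every field F and every subset S of the six pentachora of ∂Δ⁵ with |S| ≤ 3, any permitted coloring of C_S that vanishes on all boundary tetrahedra of C_S is identically zero; equivalently, the restriction map from permitted colorings of C_S to colorings of the boundary tetrahedra is injective (this gives the multiplicities a₁ = a₂ = a₃ = 1). -/

import Mathlib

open Finset

/-- The 5×5 integer matrix 𝓡. -/
def Rmat : Matrix (Fin 5) (Fin 5) ℤ :=
  !![0, -2, 1, 1, -2;
     0, -1, 0, 1, -1;
     -1, 2, -2, 0, 1;
     -1, 3, -2, -1, 2;
     0, 1, -1, 0, 0]

/-- The table of 2-columns ψ for a tetrahedron with (sorted) vertices indexed by `Fin 4`: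
for indices a < c, the value of ψ on the edge joining the a-th and the c-th vertex. -/
def psiPair (F : Type*) [Field F] (a c : Fin 4) : F × F :=
  if a = 0 ∧ c = 1 then (-1, 1)
  else if a = 0 ∧ c = 2 then (2, -1)
  else if a = 0 ∧ c = 3 then (-1, 0)
  else if a = 1 ∧ c = 2 then (-1, 0)
  else if a = 1 ∧ c = 3 then (0, 1)
  else if a = 2 ∧ c = 3 then (1, -1)
  else (0, 0)

/-- ψ_{t,b} for a tetrahedron `t` (a 4-element subset of the vertex set) and an edge `b`:
zero when `b ⊄ t`, and the corresponding table value otherwise. -/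
def psi (F : Type*) [Field F] {V : Type*} [LinearOrder V]
    (t : Finset V) (ht : t.card = 4) (b : Finset V) : F × F :=
  ∑ a : Fin 4, ∑ c : Fin 4,
    if a < c ∧ b = {t.orderEmbOfFin ht a, t.orderEmbOfFin ht c} then psiPair F a c else 0

/-- The i-th vertex (in increasing order) of a pentachoron `u`. -/
def pentVert {V : Type*} [LinearOrder V] (u : Finset V) (hu : u.card = 5) (i : Fin 5) : V :=
  u.orderEmbOfFin hu i

/-- The i-th tetrahedral 3-face of a pentachoron `u`: it omits the i-th vertex. -/
def pentFace {V : Type*} [LinearOrder V] (u : Finset V) (hu : u.card = 5) (i : Fin 5) :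
    Finset V :=
  u.erase (pentVert u hu i)

/-- A coloring χ (assigning a pair (x_t, y_t) ∈ F × F to each tetrahedron) is permitted on a
pentachoron `u` if the column of y-values on its five 3-faces equals 𝓡 applied to the column
of x-values. -/
def PermittedOn {V : Type*} [LinearOrder V] {F : Type*} [Field F]
    (u : Finset V) (hu : u.card = 5) (χ : Finset V → F × F) : Prop :=
  ∀ i : Fin 5,
    (χ (pentFace u hu i)).2 = ∑ j : Fin 5, (Rmat i j : F) * (χ (pentFace u hu j)).1

/-- The coloring assigning ψ_{t,b} to every tetrahedron `t`. -/
def Xi (F : Type*) [Field F] {V : Type*} [LinearOrder V] (b : Finset V) :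
    Finset V → F × F :=
  fun t => if ht : t.card = 4 then psi F t ht b else 0


/-- A coloring χ is permitted on the subcomplex C_S determined by a set S of pentachora of ∂Δ⁵
if it is permitted on every pentachoron of S. -/
def PermittedOnS (F : Type*) [Field F] (S : Finset (Finset (Fin 6)))
    (χ : Finset (Fin 6) → F × F) : Prop :=
  ∀ u ∈ S, ∀ hu : u.card = 5, PermittedOn u hu χ

/-- t is a tetrahedron of the subcomplex C_S. -/
def IsTetOf (S : Finset (Finset (Fin 6))) (t : Finset (Fin 6)) : Prop :=
  t.card = 4 ∧ ∃ u ∈ S, t ⊆ u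

/-- t is an inner tetrahedron of C_S: every pentachoron containing t belongs to S. -/
def IsInnerTet (S : Finset (Finset (Fin 6))) (t : Finset (Fin 6)) : Prop :=
  IsTetOf S t ∧ ∀ u : Finset (Fin 6), u.card = 5 → t ⊆ u → u ∈ S

/-- t is a boundary tetrahedron of C_S: it is a tetrahedron of C_S contained in some
pentachoron not in S. -/
def IsBoundaryTet (S : Finset (Finset (Fin 6))) (t : Finset (Fin 6)) : Prop :=
  IsTetOf S t ∧ ∃ u : Finset (Fin 6), u.card = 5 ∧ t ⊆ u ∧ u ∉ S

/-- The set of all six pentachora of ∂Δ⁵. -/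
def Pent : Finset (Finset (Fin 6)) := Finset.univ.filter (fun u => u.card = 5)

set_option maxHeartbeats 4000000 in
theorem keyLocal (F : Type*) [Field F] (x y : Fin 5 → F)
    (h : ∀ k, y k = ∑ l, (Rmat k l : F) * x l)
    (i j : Fin 5)
    (h0 : ∀ k, k ≠ i → k ≠ j → x k = 0 ∧ y k = 0) :
    ∀ k, x k = 0 ∧ y k = 0 := by
  suffices hx : ∀ k, x k = 0 by
    intro k
    refine ⟨hx k, ?_⟩
    rw [h k]
    simp [hx]
  suffices hij : x i = 0 ∧ x j = 0 by
    intro k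
    by_cases hki : k = i
    · exact hki ▸ hij.1
    by_cases hkj : k = j
    · exact hkj ▸ hij.2
    exact (h0 k hki hkj).1
  fin_cases i <;> fin_cases j
  · show x 0 = 0 ∧ x 0 = 0
    have e1 := h 1; have e2 := h 2; have e3 := h 3; have e4 := h 4
    have z1 := h0 1 (by decide) (by decide); have z2 := h0 2 (by decide) (by decide); have z3 := h0 3 (by decide) (by decide); have z4 := h0 4 (by decide) (by decide)
    rw [Fin.sum_univ_five] at e1 e2 e3 e4
    simp only [Rmat, Matrix.of_apply, Matrix.cons_val] at e1 e2 e3 e4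
    norm_num [Rmat, Matrix.cons_val', Matrix.cons_val_zero, Matrix.cons_val_one,
      Matrix.head_cons, Matrix.head_fin_const, Matrix.empty_val', Matrix.cons_val_fin_one] at e1 e2 e3 e4
    constructor
    · linear_combination (-5 : F) * e1 + (5 : F) * z1.2 + (-4 : F) * e2 + (4 : F) * z2.2 + (5 : F) * e3 + (-5 : F) * z3.2 + (-5 : F) * e4 + (5 : F) * z4.2 + (7 : F) * z1.1 + (3 : F) * z2.1 + (-10 : F) * z3.1 + (11 : F) * z4.1
    · linear_combination (-5 : F) * e1 + (5 : F) * z1.2 + (-4 : F) * e2 + (4 : F) * z2.2 + (5 : F) * e3 + (-5 : F) * z3.2 + (-5 : F) * e4 + (5 : F) * z4.2 + (7 : F) * z1.1 + (3 : F) * z2.1 + (-10 : F) * z3.1 + (11 : F) * z4.1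
  · show x 0 = 0 ∧ x 1 = 0
    have e2 := h 2; have e3 := h 3; have e4 := h 4
    have z2 := h0 2 (by decide) (by decide); have z3 := h0 3 (by decide) (by decide); have z4 := h0 4 (by decide) (by decide)
    rw [Fin.sum_univ_five] at e2 e3 e4
    simp only [Rmat, Matrix.of_apply, Matrix.cons_val] at e2 e3 e4
    norm_num [Rmat, Matrix.cons_val', Matrix.cons_val_zero, Matrix.cons_val_one,
      Matrix.head_cons, Matrix.head_fin_const, Matrix.empty_val', Matrix.cons_val_fin_one] at e2 e3 e4
    constructor
    · linear_combination (-2 : F) * e2 + (2 : F) * z2.2 + (3 : F) * e3 + (-3 : F) * z3.2 + (-5 : F) * e4 + (5 : F) * z4.2 + (3 : F) * z2.1 + (-3 : F) * z3.1 + (4 : F) * z4.1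
    · linear_combination (-4 : F) * e2 + (4 : F) * z2.2 + (4 : F) * e3 + (-4 : F) * z3.2 + (-5 : F) * e4 + (5 : F) * z4.2 + (5 : F) * z2.1 + (-4 : F) * z3.1 + (4 : F) * z4.1
  · show x 0 = 0 ∧ x 2 = 0
    have e1 := h 1; have e3 := h 3; have e4 := h 4
    have z1 := h0 1 (by decide) (by decide); have z3 := h0 3 (by decide) (by decide); have z4 := h0 4 (by decide) (by decide)
    rw [Fin.sum_univ_five] at e1 e3 e4
    simp only [Rmat, Matrix.of_apply, Matrix.cons_val] at e1 e3 e4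
    norm_num [Rmat, Matrix.cons_val', Matrix.cons_val_zero, Matrix.cons_val_one,
      Matrix.head_cons, Matrix.head_fin_const, Matrix.empty_val', Matrix.cons_val_fin_one] at e1 e3 e4
    constructor
    · linear_combination (-5 : F) * e1 + (5 : F) * z1.2 + (1 : F) * e3 + (-1 : F) * z3.2 + (-2 : F) * e4 + (2 : F) * z4.2 + (6 : F) * z1.1 + (-6 : F) * z3.1 + (7 : F) * z4.1
    · linear_combination (-5 : F) * e1 + (5 : F) * z1.2 + (1 : F) * e4 + (-1 : F) * z4.2 + (6 : F) * z1.1 + (-5 : F) * z3.1 + (5 : F) * z4.1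
  · show x 0 = 0 ∧ x 3 = 0
    have e1 := h 1; have e2 := h 2; have e4 := h 4
    have z1 := h0 1 (by decide) (by decide); have z2 := h0 2 (by decide) (by decide); have z4 := h0 4 (by decide) (by decide)
    rw [Fin.sum_univ_five] at e1 e2 e4
    simp only [Rmat, Matrix.of_apply, Matrix.cons_val] at e1 e2 e4
    norm_num [Rmat, Matrix.cons_val', Matrix.cons_val_zero, Matrix.cons_val_one,
      Matrix.head_cons, Matrix.head_fin_const, Matrix.empty_val', Matrix.cons_val_fin_one] at e1 e2 e4
    constructor
    · linear_combination (1 : F) * e2 + (-1 : F) * z2.2 + (-5 : F) * e4 + (5 : F) * z4.2 + (-3 : F) * z1.1 + (3 : F) * z2.1 + (1 : F) * z4.1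
    · linear_combination (-1 : F) * e1 + (1 : F) * z1.2 + (-5 : F) * e4 + (5 : F) * z4.2 + (-4 : F) * z1.1 + (5 : F) * z2.1 + (1 : F) * z4.1
  · show x 0 = 0 ∧ x 4 = 0
    have e1 := h 1; have e2 := h 2; have e3 := h 3
    have z1 := h0 1 (by decide) (by decide); have z2 := h0 2 (by decide) (by decide); have z3 := h0 3 (by decide) (by decide)
    rw [Fin.sum_univ_five] at e1 e2 e3
    simp only [Rmat, Matrix.of_apply, Matrix.cons_val] at e1 e2 e3
    norm_num [Rmat, Matrix.cons_val', Matrix.cons_val_zero, Matrix.cons_val_one,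
      Matrix.head_cons, Matrix.head_fin_const, Matrix.empty_val', Matrix.cons_val_fin_one] at e1 e2 e3
    constructor
    · linear_combination (-3 : F) * e1 + (3 : F) * z1.2 + (5 : F) * e2 + (-5 : F) * z2.2 + (-4 : F) * e3 + (4 : F) * z3.2 + (1 : F) * z1.1 + (-2 : F) * z2.1 + (1 : F) * z3.1
    · linear_combination (-4 : F) * e1 + (4 : F) * z1.2 + (5 : F) * e2 + (-5 : F) * z2.2 + (-5 : F) * e3 + (5 : F) * z3.2 + (-1 : F) * z1.1 + (1 : F) * z3.1
  · show x 1 = 0 ∧ x 0 = 0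
    have e2 := h 2; have e3 := h 3; have e4 := h 4
    have z2 := h0 2 (by decide) (by decide); have z3 := h0 3 (by decide) (by decide); have z4 := h0 4 (by decide) (by decide)
    rw [Fin.sum_univ_five] at e2 e3 e4
    simp only [Rmat, Matrix.of_apply, Matrix.cons_val] at e2 e3 e4
    norm_num [Rmat, Matrix.cons_val', Matrix.cons_val_zero, Matrix.cons_val_one,
      Matrix.head_cons, Matrix.head_fin_const, Matrix.empty_val', Matrix.cons_val_fin_one] at e2 e3 e4
    constructor
    · linear_combination (-4 : F) * e2 + (4 : F) * z2.2 + (4 : F) * e3 + (-4 : F) * z3.2 + (-5 : F) * e4 + (5 : F) * z4.2 + (5 : F) * z2.1 + (-4 : F) * z3.1 + (4 : F) * z4.1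
    · linear_combination (-2 : F) * e2 + (2 : F) * z2.2 + (3 : F) * e3 + (-3 : F) * z3.2 + (-5 : F) * e4 + (5 : F) * z4.2 + (3 : F) * z2.1 + (-3 : F) * z3.1 + (4 : F) * z4.1
  · show x 1 = 0 ∧ x 1 = 0
    have e0 := h 0; have e2 := h 2; have e3 := h 3; have e4 := h 4
    have z0 := h0 0 (by decide) (by decide); have z2 := h0 2 (by decide) (by decide); have z3 := h0 3 (by decide) (by decide); have z4 := h0 4 (by decide) (by decide)
    rw [Fin.sum_univ_five] at e0 e2 e3 e4
    simp only [Rmat, Matrix.of_apply, Matrix.cons_val] at e0 e2 e3 e4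
    norm_num [Rmat, Matrix.cons_val', Matrix.cons_val_zero, Matrix.cons_val_one,
      Matrix.head_cons, Matrix.head_fin_const, Matrix.empty_val', Matrix.cons_val_fin_one] at e0 e2 e3 e4
    constructor
    · linear_combination (-5 : F) * e0 + (5 : F) * z0.2 + (-5 : F) * e2 + (5 : F) * z2.2 + (-2 : F) * e3 + (2 : F) * z3.2 + (5 : F) * e4 + (-5 : F) * z4.2 + (7 : F) * z0.1 + (4 : F) * z2.1 + (-3 : F) * z3.1 + (1 : F) * z4.1
    · linear_combination (-5 : F) * e0 + (5 : F) * z0.2 + (-5 : F) * e2 + (5 : F) * z2.2 + (-2 : F) * e3 + (2 : F) * z3.2 + (5 : F) * e4 + (-5 : F) * z4.2 + (7 : F) * z0.1 + (4 : F) * z2.1 + (-3 : F) * z3.1 + (1 : F) * z4.1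
  · show x 1 = 0 ∧ x 2 = 0
    have e0 := h 0; have e3 := h 3; have e4 := h 4
    have z0 := h0 0 (by decide) (by decide); have z3 := h0 3 (by decide) (by decide); have z4 := h0 4 (by decide) (by decide)
    rw [Fin.sum_univ_five] at e0 e3 e4
    simp only [Rmat, Matrix.of_apply, Matrix.cons_val] at e0 e3 e4
    norm_num [Rmat, Matrix.cons_val', Matrix.cons_val_zero, Matrix.cons_val_one,
      Matrix.head_cons, Matrix.head_fin_const, Matrix.empty_val', Matrix.cons_val_fin_one] at e0 e3 e4
    constructor
    · linear_combination (-3 : F) * e0 + (3 : F) * z0.2 + (-4 : F) * e3 + (4 : F) * z3.2 + (5 : F) * e4 + (-5 : F) * z4.2 + (4 : F) * z0.1 + (1 : F) * z3.1 + (-2 : F) * z4.1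
    · linear_combination (-2 : F) * e0 + (2 : F) * z0.2 + (-3 : F) * e3 + (3 : F) * z3.2 + (5 : F) * e4 + (-5 : F) * z4.2 + (3 : F) * z0.1 + (1 : F) * z3.1 + (-2 : F) * z4.1
  · show x 1 = 0 ∧ x 3 = 0
    have e0 := h 0; have e2 := h 2; have e4 := h 4
    have z0 := h0 0 (by decide) (by decide); have z2 := h0 2 (by decide) (by decide); have z4 := h0 4 (by decide) (by decide)
    rw [Fin.sum_univ_five] at e0 e2 e4
    simp only [Rmat, Matrix.of_apply, Matrix.cons_val] at e0 e2 e4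
    norm_num [Rmat, Matrix.cons_val', Matrix.cons_val_zero, Matrix.cons_val_one,
      Matrix.head_cons, Matrix.head_fin_const, Matrix.empty_val', Matrix.cons_val_fin_one] at e0 e2 e4
    constructor
    · linear_combination (-3 : F) * e2 + (3 : F) * z2.2 + (5 : F) * e4 + (-5 : F) * z4.2 + (3 : F) * z0.1 + (1 : F) * z2.1 + (-3 : F) * z4.1
    · linear_combination (-1 : F) * e0 + (1 : F) * z0.2 + (-3 : F) * e2 + (3 : F) * z2.2 + (4 : F) * e4 + (-4 : F) * z4.2 + (3 : F) * z0.1 + (1 : F) * z2.1 + (-1 : F) * z4.1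
  · show x 1 = 0 ∧ x 4 = 0
    have e0 := h 0; have e2 := h 2; have e3 := h 3
    have z0 := h0 0 (by decide) (by decide); have z2 := h0 2 (by decide) (by decide); have z3 := h0 3 (by decide) (by decide)
    rw [Fin.sum_univ_five] at e0 e2 e3
    simp only [Rmat, Matrix.of_apply, Matrix.cons_val] at e0 e2 e3
    norm_num [Rmat, Matrix.cons_val', Matrix.cons_val_zero, Matrix.cons_val_one,
      Matrix.head_cons, Matrix.head_fin_const, Matrix.empty_val', Matrix.cons_val_fin_one] at e0 e2 e3
    constructor
    · linear_combination (-3 : F) * e0 + (3 : F) * z0.2 + (4 : F) * e2 + (-4 : F) * z2.2 + (-5 : F) * e3 + (5 : F) * z3.2 + (1 : F) * z0.1 + (-1 : F) * z2.1 + (2 : F) * z3.1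
    · linear_combination (-1 : F) * e0 + (1 : F) * z0.2 + (5 : F) * e2 + (-5 : F) * z2.2 + (-4 : F) * e3 + (4 : F) * z3.2 + (-1 : F) * z0.1 + (-3 : F) * z2.1 + (3 : F) * z3.1
  · show x 2 = 0 ∧ x 0 = 0
    have e1 := h 1; have e3 := h 3; have e4 := h 4
    have z1 := h0 1 (by decide) (by decide); have z3 := h0 3 (by decide) (by decide); have z4 := h0 4 (by decide) (by decide)
    rw [Fin.sum_univ_five] at e1 e3 e4
    simp only [Rmat, Matrix.of_apply, Matrix.cons_val] at e1 e3 e4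
    norm_num [Rmat, Matrix.cons_val', Matrix.cons_val_zero, Matrix.cons_val_one,
      Matrix.head_cons, Matrix.head_fin_const, Matrix.empty_val', Matrix.cons_val_fin_one] at e1 e3 e4
    constructor
    · linear_combination (-5 : F) * e1 + (5 : F) * z1.2 + (1 : F) * e4 + (-1 : F) * z4.2 + (6 : F) * z1.1 + (-5 : F) * z3.1 + (5 : F) * z4.1
    · linear_combination (-5 : F) * e1 + (5 : F) * z1.2 + (1 : F) * e3 + (-1 : F) * z3.2 + (-2 : F) * e4 + (2 : F) * z4.2 + (6 : F) * z1.1 + (-6 : F) * z3.1 + (7 : F) * z4.1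
  · show x 2 = 0 ∧ x 1 = 0
    have e0 := h 0; have e3 := h 3; have e4 := h 4
    have z0 := h0 0 (by decide) (by decide); have z3 := h0 3 (by decide) (by decide); have z4 := h0 4 (by decide) (by decide)
    rw [Fin.sum_univ_five] at e0 e3 e4
    simp only [Rmat, Matrix.of_apply, Matrix.cons_val] at e0 e3 e4
    norm_num [Rmat, Matrix.cons_val', Matrix.cons_val_zero, Matrix.cons_val_one,
      Matrix.head_cons, Matrix.head_fin_const, Matrix.empty_val', Matrix.cons_val_fin_one] at e0 e3 e4
    constructor
    · linear_combination (-2 : F) * e0 + (2 : F) * z0.2 + (-3 : F) * e3 + (3 : F) * z3.2 + (5 : F) * e4 + (-5 : F) * z4.2 + (3 : F) * z0.1 + (1 : F) * z3.1 + (-2 : F) * z4.1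
    · linear_combination (-3 : F) * e0 + (3 : F) * z0.2 + (-4 : F) * e3 + (4 : F) * z3.2 + (5 : F) * e4 + (-5 : F) * z4.2 + (4 : F) * z0.1 + (1 : F) * z3.1 + (-2 : F) * z4.1
  · show x 2 = 0 ∧ x 2 = 0
    have e0 := h 0; have e1 := h 1; have e3 := h 3; have e4 := h 4
    have z0 := h0 0 (by decide) (by decide); have z1 := h0 1 (by decide) (by decide); have z3 := h0 3 (by decide) (by decide); have z4 := h0 4 (by decide) (by decide)
    rw [Fin.sum_univ_five] at e0 e1 e3 e4
    simp only [Rmat, Matrix.of_apply, Matrix.cons_val] at e0 e1 e3 e4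
    norm_num [Rmat, Matrix.cons_val', Matrix.cons_val_zero, Matrix.cons_val_one,
      Matrix.head_cons, Matrix.head_fin_const, Matrix.empty_val', Matrix.cons_val_fin_one] at e0 e1 e3 e4
    constructor
    · linear_combination (-5 : F) * e0 + (5 : F) * z0.2 + (-5 : F) * e1 + (5 : F) * z1.2 + (-4 : F) * e3 + (4 : F) * z3.2 + (4 : F) * e4 + (-4 : F) * z4.2 + (4 : F) * z0.1 + (7 : F) * z1.1 + (-6 : F) * z3.1 + (7 : F) * z4.1
    · linear_combination (-5 : F) * e0 + (5 : F) * z0.2 + (-5 : F) * e1 + (5 : F) * z1.2 + (-4 : F) * e3 + (4 : F) * z3.2 + (4 : F) * e4 + (-4 : F) * z4.2 + (4 : F) * z0.1 + (7 : F) * z1.1 + (-6 : F) * z3.1 + (7 : F) * z4.1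
  · show x 2 = 0 ∧ x 3 = 0
    have e0 := h 0; have e1 := h 1; have e4 := h 4
    have z0 := h0 0 (by decide) (by decide); have z1 := h0 1 (by decide) (by decide); have z4 := h0 4 (by decide) (by decide)
    rw [Fin.sum_univ_five] at e0 e1 e4
    simp only [Rmat, Matrix.of_apply, Matrix.cons_val] at e0 e1 e4
    norm_num [Rmat, Matrix.cons_val', Matrix.cons_val_zero, Matrix.cons_val_one,
      Matrix.head_cons, Matrix.head_fin_const, Matrix.empty_val', Matrix.cons_val_fin_one] at e0 e1 e4
    constructor
    · linear_combination (-5 : F) * e0 + (5 : F) * z0.2 + (5 : F) * e1 + (-5 : F) * z1.2 + (-4 : F) * e4 + (4 : F) * z4.2 + (1 : F) * z1.1 + (5 : F) * z4.1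
    · linear_combination (-5 : F) * e0 + (5 : F) * z0.2 + (4 : F) * e1 + (-4 : F) * z1.2 + (-5 : F) * e4 + (5 : F) * z4.2 + (1 : F) * z1.1 + (6 : F) * z4.1
  · show x 2 = 0 ∧ x 4 = 0
    have e0 := h 0; have e1 := h 1; have e3 := h 3
    have z0 := h0 0 (by decide) (by decide); have z1 := h0 1 (by decide) (by decide); have z3 := h0 3 (by decide) (by decide)
    rw [Fin.sum_univ_five] at e0 e1 e3
    simp only [Rmat, Matrix.of_apply, Matrix.cons_val] at e0 e1 e3
    norm_num [Rmat, Matrix.cons_val', Matrix.cons_val_zero, Matrix.cons_val_one,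
      Matrix.head_cons, Matrix.head_fin_const, Matrix.empty_val', Matrix.cons_val_fin_one] at e0 e1 e3
    constructor
    · linear_combination (-3 : F) * e0 + (3 : F) * z0.2 + (4 : F) * e1 + (-4 : F) * z1.2 + (-1 : F) * e3 + (1 : F) * z3.2 + (1 : F) * z0.1 + (-1 : F) * z1.1 + (2 : F) * z3.1
    · linear_combination (-4 : F) * e0 + (4 : F) * z0.2 + (5 : F) * e1 + (-5 : F) * z1.2 + (-2 : F) * e3 + (2 : F) * z3.2 + (2 : F) * z0.1 + (-3 : F) * z1.1 + (3 : F) * z3.1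
  · show x 3 = 0 ∧ x 0 = 0
    have e1 := h 1; have e2 := h 2; have e4 := h 4
    have z1 := h0 1 (by decide) (by decide); have z2 := h0 2 (by decide) (by decide); have z4 := h0 4 (by decide) (by decide)
    rw [Fin.sum_univ_five] at e1 e2 e4
    simp only [Rmat, Matrix.of_apply, Matrix.cons_val] at e1 e2 e4
    norm_num [Rmat, Matrix.cons_val', Matrix.cons_val_zero, Matrix.cons_val_one,
      Matrix.head_cons, Matrix.head_fin_const, Matrix.empty_val', Matrix.cons_val_fin_one] at e1 e2 e4
    constructor
    · linear_combination (-1 : F) * e1 + (1 : F) * z1.2 + (-5 : F) * e4 + (5 : F) * z4.2 + (-4 : F) * z1.1 + (5 : F) * z2.1 + (1 : F) * z4.1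
    · linear_combination (1 : F) * e2 + (-1 : F) * z2.2 + (-5 : F) * e4 + (5 : F) * z4.2 + (-3 : F) * z1.1 + (3 : F) * z2.1 + (1 : F) * z4.1
  · show x 3 = 0 ∧ x 1 = 0
    have e0 := h 0; have e2 := h 2; have e4 := h 4
    have z0 := h0 0 (by decide) (by decide); have z2 := h0 2 (by decide) (by decide); have z4 := h0 4 (by decide) (by decide)
    rw [Fin.sum_univ_five] at e0 e2 e4
    simp only [Rmat, Matrix.of_apply, Matrix.cons_val] at e0 e2 e4
    norm_num [Rmat, Matrix.cons_val', Matrix.cons_val_zero, Matrix.cons_val_one,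
      Matrix.head_cons, Matrix.head_fin_const, Matrix.empty_val', Matrix.cons_val_fin_one] at e0 e2 e4
    constructor
    · linear_combination (-1 : F) * e0 + (1 : F) * z0.2 + (-3 : F) * e2 + (3 : F) * z2.2 + (4 : F) * e4 + (-4 : F) * z4.2 + (3 : F) * z0.1 + (1 : F) * z2.1 + (-1 : F) * z4.1
    · linear_combination (-3 : F) * e2 + (3 : F) * z2.2 + (5 : F) * e4 + (-5 : F) * z4.2 + (3 : F) * z0.1 + (1 : F) * z2.1 + (-3 : F) * z4.1
  · show x 3 = 0 ∧ x 2 = 0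
    have e0 := h 0; have e1 := h 1; have e4 := h 4
    have z0 := h0 0 (by decide) (by decide); have z1 := h0 1 (by decide) (by decide); have z4 := h0 4 (by decide) (by decide)
    rw [Fin.sum_univ_five] at e0 e1 e4
    simp only [Rmat, Matrix.of_apply, Matrix.cons_val] at e0 e1 e4
    norm_num [Rmat, Matrix.cons_val', Matrix.cons_val_zero, Matrix.cons_val_one,
      Matrix.head_cons, Matrix.head_fin_const, Matrix.empty_val', Matrix.cons_val_fin_one] at e0 e1 e4
    constructor
    · linear_combination (-5 : F) * e0 + (5 : F) * z0.2 + (4 : F) * e1 + (-4 : F) * z1.2 + (-5 : F) * e4 + (5 : F) * z4.2 + (1 : F) * z1.1 + (6 : F) * z4.1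
    · linear_combination (-5 : F) * e0 + (5 : F) * z0.2 + (5 : F) * e1 + (-5 : F) * z1.2 + (-4 : F) * e4 + (4 : F) * z4.2 + (1 : F) * z1.1 + (5 : F) * z4.1
  · show x 3 = 0 ∧ x 3 = 0
    have e0 := h 0; have e1 := h 1; have e2 := h 2; have e4 := h 4
    have z0 := h0 0 (by decide) (by decide); have z1 := h0 1 (by decide) (by decide); have z2 := h0 2 (by decide) (by decide); have z4 := h0 4 (by decide) (by decide)
    rw [Fin.sum_univ_five] at e0 e1 e2 e4
    simp only [Rmat, Matrix.of_apply, Matrix.cons_val] at e0 e1 e2 e4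
    norm_num [Rmat, Matrix.cons_val', Matrix.cons_val_zero, Matrix.cons_val_one,
      Matrix.head_cons, Matrix.head_fin_const, Matrix.empty_val', Matrix.cons_val_fin_one] at e0 e1 e2 e4
    constructor
    · linear_combination (-5 : F) * e0 + (5 : F) * z0.2 + (4 : F) * e1 + (-4 : F) * z1.2 + (-5 : F) * e2 + (5 : F) * z2.2 + (-5 : F) * e4 + (5 : F) * z4.2 + (5 : F) * z0.1 + (-9 : F) * z1.1 + (10 : F) * z2.1 + (1 : F) * z4.1
    · linear_combination (-5 : F) * e0 + (5 : F) * z0.2 + (4 : F) * e1 + (-4 : F) * z1.2 + (-5 : F) * e2 + (5 : F) * z2.2 + (-5 : F) * e4 + (5 : F) * z4.2 + (5 : F) * z0.1 + (-9 : F) * z1.1 + (10 : F) * z2.1 + (1 : F) * z4.1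
  · show x 3 = 0 ∧ x 4 = 0
    have e0 := h 0; have e1 := h 1; have e2 := h 2
    have z0 := h0 0 (by decide) (by decide); have z1 := h0 1 (by decide) (by decide); have z2 := h0 2 (by decide) (by decide)
    rw [Fin.sum_univ_five] at e0 e1 e2
    simp only [Rmat, Matrix.of_apply, Matrix.cons_val] at e0 e1 e2
    norm_num [Rmat, Matrix.cons_val', Matrix.cons_val_zero, Matrix.cons_val_one,
      Matrix.head_cons, Matrix.head_fin_const, Matrix.empty_val', Matrix.cons_val_fin_one] at e0 e1 e2
    constructor
    · linear_combination (-4 : F) * e0 + (4 : F) * z0.2 + (3 : F) * e1 + (-3 : F) * z1.2 + (-5 : F) * e2 + (5 : F) * z2.2 + (5 : F) * z0.1 + (-5 : F) * z1.1 + (6 : F) * z2.1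
    · linear_combination (-4 : F) * e0 + (4 : F) * z0.2 + (4 : F) * e1 + (-4 : F) * z1.2 + (-5 : F) * e2 + (5 : F) * z2.2 + (5 : F) * z0.1 + (-6 : F) * z1.1 + (6 : F) * z2.1
  · show x 4 = 0 ∧ x 0 = 0
    have e1 := h 1; have e2 := h 2; have e3 := h 3
    have z1 := h0 1 (by decide) (by decide); have z2 := h0 2 (by decide) (by decide); have z3 := h0 3 (by decide) (by decide)
    rw [Fin.sum_univ_five] at e1 e2 e3
    simp only [Rmat, Matrix.of_apply, Matrix.cons_val] at e1 e2 e3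
    norm_num [Rmat, Matrix.cons_val', Matrix.cons_val_zero, Matrix.cons_val_one,
      Matrix.head_cons, Matrix.head_fin_const, Matrix.empty_val', Matrix.cons_val_fin_one] at e1 e2 e3
    constructor
    · linear_combination (-4 : F) * e1 + (4 : F) * z1.2 + (5 : F) * e2 + (-5 : F) * z2.2 + (-5 : F) * e3 + (5 : F) * z3.2 + (-1 : F) * z1.1 + (1 : F) * z3.1
    · linear_combination (-3 : F) * e1 + (3 : F) * z1.2 + (5 : F) * e2 + (-5 : F) * z2.2 + (-4 : F) * e3 + (4 : F) * z3.2 + (1 : F) * z1.1 + (-2 : F) * z2.1 + (1 : F) * z3.1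
  · show x 4 = 0 ∧ x 1 = 0
    have e0 := h 0; have e2 := h 2; have e3 := h 3
    have z0 := h0 0 (by decide) (by decide); have z2 := h0 2 (by decide) (by decide); have z3 := h0 3 (by decide) (by decide)
    rw [Fin.sum_univ_five] at e0 e2 e3
    simp only [Rmat, Matrix.of_apply, Matrix.cons_val] at e0 e2 e3
    norm_num [Rmat, Matrix.cons_val', Matrix.cons_val_zero, Matrix.cons_val_one,
      Matrix.head_cons, Matrix.head_fin_const, Matrix.empty_val', Matrix.cons_val_fin_one] at e0 e2 e3
    constructor
    · linear_combination (-1 : F) * e0 + (1 : F) * z0.2 + (5 : F) * e2 + (-5 : F) * z2.2 + (-4 : F) * e3 + (4 : F) * z3.2 + (-1 : F) * z0.1 + (-3 : F) * z2.1 + (3 : F) * z3.1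
    · linear_combination (-3 : F) * e0 + (3 : F) * z0.2 + (4 : F) * e2 + (-4 : F) * z2.2 + (-5 : F) * e3 + (5 : F) * z3.2 + (1 : F) * z0.1 + (-1 : F) * z2.1 + (2 : F) * z3.1
  · show x 4 = 0 ∧ x 2 = 0
    have e0 := h 0; have e1 := h 1; have e3 := h 3
    have z0 := h0 0 (by decide) (by decide); have z1 := h0 1 (by decide) (by decide); have z3 := h0 3 (by decide) (by decide)
    rw [Fin.sum_univ_five] at e0 e1 e3
    simp only [Rmat, Matrix.of_apply, Matrix.cons_val] at e0 e1 e3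
    norm_num [Rmat, Matrix.cons_val', Matrix.cons_val_zero, Matrix.cons_val_one,
      Matrix.head_cons, Matrix.head_fin_const, Matrix.empty_val', Matrix.cons_val_fin_one] at e0 e1 e3
    constructor
    · linear_combination (-4 : F) * e0 + (4 : F) * z0.2 + (5 : F) * e1 + (-5 : F) * z1.2 + (-2 : F) * e3 + (2 : F) * z3.2 + (2 : F) * z0.1 + (-3 : F) * z1.1 + (3 : F) * z3.1
    · linear_combination (-3 : F) * e0 + (3 : F) * z0.2 + (4 : F) * e1 + (-4 : F) * z1.2 + (-1 : F) * e3 + (1 : F) * z3.2 + (1 : F) * z0.1 + (-1 : F) * z1.1 + (2 : F) * z3.1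
  · show x 4 = 0 ∧ x 3 = 0
    have e0 := h 0; have e1 := h 1; have e2 := h 2
    have z0 := h0 0 (by decide) (by decide); have z1 := h0 1 (by decide) (by decide); have z2 := h0 2 (by decide) (by decide)
    rw [Fin.sum_univ_five] at e0 e1 e2
    simp only [Rmat, Matrix.of_apply, Matrix.cons_val] at e0 e1 e2
    norm_num [Rmat, Matrix.cons_val', Matrix.cons_val_zero, Matrix.cons_val_one,
      Matrix.head_cons, Matrix.head_fin_const, Matrix.empty_val', Matrix.cons_val_fin_one] at e0 e1 e2
    constructor
    · linear_combination (-4 : F) * e0 + (4 : F) * z0.2 + (4 : F) * e1 + (-4 : F) * z1.2 + (-5 : F) * e2 + (5 : F) * z2.2 + (5 : F) * z0.1 + (-6 : F) * z1.1 + (6 : F) * z2.1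
    · linear_combination (-4 : F) * e0 + (4 : F) * z0.2 + (3 : F) * e1 + (-3 : F) * z1.2 + (-5 : F) * e2 + (5 : F) * z2.2 + (5 : F) * z0.1 + (-5 : F) * z1.1 + (6 : F) * z2.1
  · show x 4 = 0 ∧ x 4 = 0
    have e0 := h 0; have e1 := h 1; have e2 := h 2; have e3 := h 3
    have z0 := h0 0 (by decide) (by decide); have z1 := h0 1 (by decide) (by decide); have z2 := h0 2 (by decide) (by decide); have z3 := h0 3 (by decide) (by decide)
    rw [Fin.sum_univ_five] at e0 e1 e2 e3
    simp only [Rmat, Matrix.of_apply, Matrix.cons_val] at e0 e1 e2 e3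
    norm_num [Rmat, Matrix.cons_val', Matrix.cons_val_zero, Matrix.cons_val_one,
      Matrix.head_cons, Matrix.head_fin_const, Matrix.empty_val', Matrix.cons_val_fin_one] at e0 e1 e2 e3
    constructor
    · linear_combination (-5 : F) * e0 + (5 : F) * z0.2 + (-4 : F) * e1 + (4 : F) * z1.2 + (-5 : F) * e2 + (5 : F) * z2.2 + (-5 : F) * e3 + (5 : F) * z3.2 + (10 : F) * z0.1 + (-11 : F) * z1.1 + (15 : F) * z2.1 + (-4 : F) * z3.1
    · linear_combination (-5 : F) * e0 + (5 : F) * z0.2 + (-4 : F) * e1 + (4 : F) * z1.2 + (-5 : F) * e2 + (5 : F) * z2.2 + (-5 : F) * e3 + (5 : F) * z3.2 + (10 : F) * z0.1 + (-11 : F) * z1.1 + (15 : F) * z2.1 + (-4 : F) * z3.1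


lemma pentVert_mem {V : Type*} [LinearOrder V] (u : Finset V) (hu : u.card = 5) (i : Fin 5) :
    pentVert u hu i ∈ u := Finset.orderEmbOfFin_mem u hu i

lemma pentFace_subset {V : Type*} [LinearOrder V] (u : Finset V) (hu : u.card = 5) (i : Fin 5) :
    pentFace u hu i ⊆ u := Finset.erase_subset _ _

lemma pentFace_card {V : Type*} [LinearOrder V] (u : Finset V) (hu : u.card = 5) (i : Fin 5) :
    (pentFace u hu i).card = 4 := by
  rw [pentFace, Finset.card_erase_of_mem (pentVert_mem u hu i), hu]

lemma exists_face {V : Type*} [LinearOrder V] (u t : Finset V) (hu : u.card = 5)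
    (ht : t.card = 4) (hsub : t ⊆ u) : ∃ i, t = pentFace u hu i := by
  classical
  have h1 : (u \ t).card = 1 := by rw [Finset.card_sdiff_of_subset hsub, hu, ht]
  obtain ⟨v, hv⟩ := Finset.card_eq_one.mp h1
  have hvmem := hv ▸ Finset.mem_singleton_self v
  have hvu : v ∈ u := (Finset.mem_sdiff.mp hvmem).1
  have hvt : v ∉ t := (Finset.mem_sdiff.mp hvmem).2
  obtain ⟨i, hi⟩ : ∃ i, u.orderEmbOfFin hu i = v := by
    have hr := Finset.range_orderEmbOfFin u hu
    have : v ∈ Set.range (u.orderEmbOfFin hu) := by rw [hr]; exact hvu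
    exact this
  refine ⟨i, ?_⟩
  apply Finset.eq_of_subset_of_card_le
  · intro a ha
    refine Finset.mem_erase.mpr ⟨?_, hsub ha⟩
    intro hav
    rw [pentVert, hi] at hav
    exact hvt (hav ▸ ha)
  · rw [pentFace_card u hu i, ht]


/-- for every field F and every subset S of the six pentachora of ∂Δ⁵ with
|S| ≤ 3, any permitted coloring of C_S vanishing on all boundary tetrahedra of C_S vanishes
on all tetrahedra of C_S (so the restriction map to boundary colorings is injective, giving
multiplicities a₁ = a₂ = a₃ = 1). -/
theorem statement4 (F : Type*) [Field F] (S : Finset (Finset (Fin 6)))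
    (hS : ∀ u ∈ S, u.card = 5) (hcard : S.card ≤ 3)
    (χ : Finset (Fin 6) → F × F) (hperm : PermittedOnS F S χ)
    (hbd : ∀ t, IsBoundaryTet S t → χ t = 0) :
    ∀ t, IsTetOf S t → χ t = 0 := by
  intro t ht
  obtain ⟨ht4, u, huS, htu⟩ := ht
  have hu5 : u.card = 5 := hS u huS
  obtain ⟨i, rfl⟩ := exists_face u t hu5 ht4 htu
  set T : Fin 5 → Finset (Fin 6) := fun k => Finset.univ.erase (pentVert u hu5 k) with hT
  have hTcard : ∀ k, (T k).card = 5 := by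
    intro k
    rw [hT]
    simp [Finset.card_erase_of_mem]
  have hTne : ∀ k, T k ≠ u := by
    intro k hk
    have hm : pentVert u hu5 k ∈ T k := by rw [hk]; exact pentVert_mem u hu5 k
    exact Finset.notMem_erase _ _ hm
  have hTinj : Function.Injective T := by
    intro a b hab
    have h1 : pentVert u hu5 b ∉ T b := Finset.notMem_erase _ _
    rw [← hab, hT] at h1
    simp only [Finset.mem_erase, Finset.mem_univ, and_true, not_not] at h1
    exact (u.orderEmbOfFin hu5).injective h1.symm
  set I : Finset (Fin 5) := Finset.univ.filter (fun k => T k ∈ S) with hI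
  have hIcard : I.card ≤ 2 := by
    have h1 : I.card ≤ (S.erase u).card := by
      apply Finset.card_le_card_of_injOn T
      · intro k hk
        rw [hI] at hk
        exact Finset.mem_erase.mpr ⟨hTne k, (Finset.mem_filter.mp hk).2⟩
      · exact fun a _ b _ hab => hTinj hab
    have h2 : (S.erase u).card ≤ 2 := by
      rw [Finset.card_erase_of_mem huS]
      omega
    omega
  obtain ⟨i0, j0, hsub⟩ : ∃ i0 j0 : Fin 5, I ⊆ {i0, j0} := by
    rcases Finset.eq_empty_or_nonempty I with h | ⟨a, ha⟩
    · exact ⟨0, 0, by simp [h]⟩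
    rcases Finset.eq_empty_or_nonempty (I.erase a) with h2 | ⟨b, hb⟩
    · refine ⟨a, a, fun x hx => ?_⟩
      have hxa : x = a := by
        by_contra hne
        exact absurd (Finset.mem_erase.mpr ⟨hne, hx⟩) (by simp [h2])
      simp [hxa]
    refine ⟨a, b, fun x hx => ?_⟩
    by_cases hxa : x = a
    · simp [hxa]
    by_cases hxb : x = b
    · simp [hxb]
    exfalso
    have hbI := (Finset.mem_erase.mp hb).2
    have hba := (Finset.mem_erase.mp hb).1
    have hsub3 : ({x, a, b} : Finset (Fin 5)) ⊆ I := by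
      intro z hz
      simp only [Finset.mem_insert, Finset.mem_singleton] at hz
      rcases hz with rfl | rfl | rfl <;> assumption
    have h3 : ({x, a, b} : Finset (Fin 5)).card = 3 := by
      rw [Finset.card_insert_of_notMem (by simp [hxa, hxb]),
        Finset.card_insert_of_notMem (by simp [Ne.symm hba]), Finset.card_singleton]
    have := Finset.card_le_card hsub3
    omega
  have hperm' := hperm u huS hu5
  have h0 : ∀ k, k ≠ i0 → k ≠ j0 →
      (χ (pentFace u hu5 k)).1 = 0 ∧ (χ (pentFace u hu5 k)).2 = 0 := by
    intro k hk1 hk2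
    have hknI : k ∉ I := by
      intro hk
      rcases Finset.mem_insert.mp (hsub hk) with h | h
      · exact hk1 h
      · exact hk2 (Finset.mem_singleton.mp h)
    have hTkS : T k ∉ S := by
      intro hTk
      exact hknI (Finset.mem_filter.mpr ⟨Finset.mem_univ k, hTk⟩)
    have hfsub : pentFace u hu5 k ⊆ T k := by
      intro a ha
      simp only [pentFace, Finset.mem_erase] at ha
      exact Finset.mem_erase_of_ne_of_mem ha.1 (Finset.mem_univ a)
    have hb : IsBoundaryTet S (pentFace u hu5 k) :=
      ⟨⟨pentFace_card u hu5 k, u, huS, pentFace_subset u hu5 k⟩,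
        T k, hTcard k, hfsub, hTkS⟩
    have := hbd _ hb
    rw [this]
    exact ⟨rfl, rfl⟩
  have key := keyLocal F (fun k => (χ (pentFace u hu5 k)).1)
    (fun k => (χ (pentFace u hu5 k)).2) hperm' i0 j0 h0
  have ki := key i
  exact Prod.ext ki.1 ki.2
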